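/- arXiv:2212.14578 — 3 statements merged into one kernel-verified Lean document; each statement's English description precedes it below -/
import Mathlib

section
/- Let P be a probability distribution with support of size k < ∞ on a countable set, and let P̂ₙ be the empirical distribution from n ≥ 3 i.i.d. samples. Then the expected missing mass satisfies E[Σ_a 1{P̂ₙ(a)=0}·P(a)] ≤ k/n, and the weighted version satisfies E[Σ_a 1{P̂ₙ(a)=0}·P(a)·max{1, log(1/P(a))}] ≤ k·log(n)/n. -/
open Real

lemma lemA {x : ℝ} (hx0 : 0 ≤ x) (hx1 : x ≤ 1) {n : ℕ} (hn : 1 ≤ n) :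
    (1 - x)^n * x ≤ 1 / n := by
  have hn0 : (0:ℝ) < n := by positivity
  have h1 : (1 - x)^n ≤ Real.exp (-(n*x)) := by
    calc (1-x)^n ≤ (Real.exp (-x))^n := by
          apply pow_le_pow_left₀ (by linarith)
          linarith [Real.add_one_le_exp (-x)]
      _ = Real.exp (-(n*x)) := by
          rw [← Real.exp_nat_mul]; ring_nf
  have h2 : (n*x) * Real.exp (-(n*x)) ≤ 1 := by
    have := Real.add_one_le_exp (n*x)
    have he : 0 < Real.exp (n*x) := Real.exp_pos _
    rw [Real.exp_neg, mul_inv_le_iff₀ he]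
    nlinarith
  rw [le_div_iff₀ hn0]
  calc (1-x)^n * x * n = (n*x) * (1-x)^n := by ring
    _ ≤ (n*x) * Real.exp (-(n*x)) := by
        apply mul_le_mul_of_nonneg_left h1 (by positivity)
    _ ≤ 1 := h2

lemma lemB {x : ℝ} (hx0 : 0 < x) (hx1 : x ≤ 1) {n : ℕ} (hn : 3 ≤ n) :
    (1 - x)^n * (x * max 1 (Real.log (1/x))) ≤ Real.log n / n := by
  have hn1 : (1:ℕ) ≤ n := by omega
  have hn0 : (0:ℝ) < n := by positivity
  have hn3 : (3:ℝ) ≤ n := by exact_mod_cast hn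
  have hlogn : 1 ≤ Real.log n := by
    have h3 : Real.exp 1 ≤ n := by
      have := Real.exp_one_lt_d9
      linarith
    calc (1:ℝ) = Real.log (Real.exp 1) := (Real.log_exp 1).symm
      _ ≤ Real.log n := Real.log_le_log (Real.exp_pos 1) h3
  rcases le_or_gt (Real.log (1/x)) 1 with hc | hc
  · rw [max_eq_left hc, mul_one]
    calc (1-x)^n * x ≤ 1/n := lemA hx0.le hx1 hn1
      _ ≤ Real.log n / n := by gcongr
  · rw [max_eq_right hc.le]
    have hp : (0:ℝ) ≤ (1-x)^n := pow_nonneg (by linarith) n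
    have hpow1 : (1-x)^n ≤ 1 := by
      apply pow_le_one₀ (by linarith) (by linarith)
    rcases le_or_gt (1/(n:ℝ)) x with hcase | hcase
    · -- log(1/x) ≤ log n
      have hlx : Real.log (1/x) ≤ Real.log n := by
        apply Real.log_le_log (by positivity)
        rw [div_le_iff₀ hx0]
        calc (1:ℝ) = n * (1/n) := by field_simp
          _ ≤ n * x := mul_le_mul_of_nonneg_left hcase hn0.le
      calc (1-x)^n * (x * Real.log (1/x)) ≤ (1-x)^n * (x * Real.log n) := by
            apply mul_le_mul_of_nonneg_left _ hp
            exact mul_le_mul_of_nonneg_left hlx hx0.le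
        _ = ((1-x)^n * x) * Real.log n := by ring
        _ ≤ (1/n) * Real.log n := by
            apply mul_le_mul_of_nonneg_right (lemA hx0.le hx1 hn1) (by linarith)
        _ = Real.log n / n := by ring
    · -- x < 1/n
      have ht0 : 0 < (n:ℝ) * x := by positivity
      have ht1 : (n:ℝ) * x < 1 := by
        calc (n:ℝ) * x < n * (1/n) := by
              exact mul_lt_mul_of_pos_left hcase hn0
          _ = 1 := by field_simp
      -- t log(1/t) ≤ 1 - t for t = n*x
      have hkey : (n*x : ℝ) * Real.log (1/(n*x)) ≤ 1 - n*x := by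
        have := Real.log_le_sub_one_of_pos (x := 1/(n*x)) (by positivity)
        have h2 : (n*x) * Real.log (1/(n*x)) ≤ (n*x) * (1/(n*x) - 1) :=
          mul_le_mul_of_nonneg_left this ht0.le
        calc (n*x) * Real.log (1/(n*x)) ≤ (n*x) * (1/(n*x) - 1) := h2
          _ = 1 - n*x := by field_simp
      have hsplit : Real.log (1/x) = Real.log n + Real.log (1/(n*x)) := by
        rw [← Real.log_mul hn0.ne' (by positivity)]
        congr 1
        field_simp
      calc (1-x)^n * (x * Real.log (1/x)) ≤ 1 * (x * Real.log (1/x)) := by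
            apply mul_le_mul_of_nonneg_right hpow1
            exact mul_nonneg hx0.le (by linarith)
        _ = x * Real.log (1/x) := by ring
        _ ≤ Real.log n / n := by
            rw [hsplit, le_div_iff₀ hn0]
            have : (x * (Real.log n + Real.log (1/(n*x)))) * n
                = (n*x) * Real.log n + (n*x) * Real.log (1/(n*x)) := by ring
            rw [this]
            nlinarith [hkey, hlogn]
open Finset

lemma expectation_eq {α : Type*} [DecidableEq α] (P : α → ℝ)
    (s : Finset α) (hvanish : ∀ a ∉ s, P a = 0) (hsum1 : ∑ a ∈ s, P a = 1)
    (n : ℕ) (c : α → ℝ) (hc : ∀ a ∉ s, c a = 0) :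
    (∑' ω : Fin n → α, (∏ i, P (ω i)) *
        ∑' a, (if (Finset.univ.filter fun i => ω i = a).card = 0 then c a else 0))
      = ∑ a ∈ s, (1 - P a)^n * c a := by
  have hfin : ∀ ω : Fin n → α, ω ∉ Fintype.piFinset (fun _ : Fin n => s) →
      ∏ i, P (ω i) = 0 := by
    intro ω hω
    rw [Fintype.mem_piFinset] at hω
    push_neg at hω
    obtain ⟨i, hi⟩ := hω
    exact Finset.prod_eq_zero (mem_univ i) (hvanish _ hi)
  have hinner : ∀ ω : Fin n → α,
      (∑' a, (if (Finset.univ.filter fun i => ω i = a).card = 0 then c a else 0))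
      = ∑ a ∈ s, (if (Finset.univ.filter fun i => ω i = a).card = 0 then c a else 0) := by
    intro ω
    apply tsum_eq_sum
    intro a ha
    simp [hc a ha]
  calc (∑' ω : Fin n → α, (∏ i, P (ω i)) *
        ∑' a, (if (Finset.univ.filter fun i => ω i = a).card = 0 then c a else 0))
      = ∑ ω ∈ Fintype.piFinset (fun _ : Fin n => s), (∏ i, P (ω i)) *
          ∑ a ∈ s, (if (Finset.univ.filter fun i => ω i = a).card = 0 then c a else 0) := by
        rw [tsum_eq_sum (s := Fintype.piFinset (fun _ : Fin n => s))]
        · exact Finset.sum_congr rfl fun ω _ => by rw [hinner]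
        · intro ω hω; rw [hfin ω hω, zero_mul]
    _ = ∑ a ∈ s, ∑ ω ∈ Fintype.piFinset (fun _ : Fin n => s),
          (∏ i, P (ω i)) * (if (Finset.univ.filter fun i => ω i = a).card = 0 then c a else 0) := by
        simp_rw [Finset.mul_sum]
        exact Finset.sum_comm
    _ = ∑ a ∈ s, (1 - P a)^n * c a := by
        apply Finset.sum_congr rfl
        intro a ha
        have hstep : ∀ ω : Fin n → α,
            (∏ i, P (ω i)) * (if (Finset.univ.filter fun i => ω i = a).card = 0 then c a else 0)
            = (∏ i, if ω i = a then 0 else P (ω i)) * c a := by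
          intro ω
          by_cases h : (Finset.univ.filter fun i => ω i = a).card = 0
          · rw [if_pos h]
            congr 1
            rw [Finset.card_eq_zero, Finset.filter_eq_empty_iff] at h
            exact Finset.prod_congr rfl fun i _ => by rw [if_neg (h (mem_univ i))]
          · rw [if_neg h, mul_zero]
            have : ∃ i, ω i = a := by
              rw [Finset.card_eq_zero, ← ne_eq, ← Finset.nonempty_iff_ne_empty] at h
              obtain ⟨i, hi⟩ := h
              exact ⟨i, (Finset.mem_filter.mp hi).2⟩
            obtain ⟨i, hi⟩ := this
            rw [Finset.prod_eq_zero (mem_univ i) (by rw [if_pos hi]), zero_mul]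
        simp_rw [hstep]
        rw [← Finset.sum_mul]
        congr 1
        have := (Finset.prod_univ_sum (fun _ : Fin n => s)
          (fun (_ : Fin n) (b : α) => if b = a then 0 else P b)).symm
        rw [this]
        have hinner2 : (∑ b ∈ s, if b = a then 0 else P b) = (∑ b ∈ s, P b) - P a := by
          have h1 : ∀ b ∈ s, (if b = a then 0 else P b) = P b - (if b = a then P b else 0) := by
            intro b _
            by_cases hb : b = a <;> simp [hb]
          rw [Finset.sum_congr rfl h1, Finset.sum_sub_distrib, Finset.sum_ite_eq' s a P,
            if_pos ha]
        rw [Finset.prod_congr rfl fun i _ => hinner2, Finset.prod_const, Finset.card_univ,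
          Fintype.card_fin, hsum1]

open Finset

/-- Expected missing mass bounds: for `P` with support of size `k` and `n ≥ 3`
i.i.d. samples, `E[Σ_a 1{P̂ₙ(a)=0} P(a)] ≤ k/n` and
`E[Σ_a 1{P̂ₙ(a)=0} P(a) max{1, log(1/P(a))}] ≤ k log n / n`.  The expectation
is written out explicitly over all sample sequences with i.i.d. product
weights. -/
theorem expected_missing_mass_bound {α : Type*} [Countable α] [DecidableEq α]
    (P : α → ℝ) (hP0 : ∀ a, 0 ≤ P a) (hP1 : ∑' a, P a = 1)
    (s : Finset α) (hs : {a | P a ≠ 0} = ↑s)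
    (n : ℕ) (hn : 3 ≤ n) :
    (∑' ω : Fin n → α, (∏ i, P (ω i)) *
        ∑' a, (if (Finset.univ.filter fun i => ω i = a).card = 0 then P a else 0))
      ≤ s.card / n ∧
    (∑' ω : Fin n → α, (∏ i, P (ω i)) *
        ∑' a, (if (Finset.univ.filter fun i => ω i = a).card = 0
          then P a * max 1 (Real.log (1 / P a)) else 0))
      ≤ s.card * Real.log n / n := by
  have hvanish : ∀ a ∉ s, P a = 0 := by
    intro a ha
    by_contra h
    exact ha (by rw [← Finset.mem_coe, ← hs]; exact h)
  have hsum1 : ∑ a ∈ s, P a = 1 := by rw [← hP1]; exact (tsum_eq_sum hvanish).symm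
  have hle1 : ∀ a ∈ s, P a ≤ 1 := by
    intro a ha
    rw [← hsum1]
    exact Finset.single_le_sum (fun i _ => hP0 i) ha
  have hpos : ∀ a ∈ s, 0 < P a := by
    intro a ha
    have : P a ≠ 0 := by rw [← Set.mem_setOf_eq (p := fun a => P a ≠ 0), hs]; exact ha
    exact (hP0 a).lt_of_ne' this
  have hn1 : (1:ℕ) ≤ n := by omega
  have hn0 : (0:ℝ) < n := by positivity
  constructor
  · rw [expectation_eq P s hvanish hsum1 n P hvanish]
    calc ∑ a ∈ s, (1 - P a)^n * P a ≤ ∑ a ∈ s, 1 / (n:ℝ) := by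
          apply Finset.sum_le_sum
          intro a ha
          exact lemA (hP0 a) (hle1 a ha) hn1
      _ = s.card / n := by rw [Finset.sum_const, nsmul_eq_mul]; ring
  · rw [expectation_eq P s hvanish hsum1 n _
      (fun a ha => by rw [hvanish a ha, zero_mul])]
    calc ∑ a ∈ s, (1 - P a)^n * (P a * max 1 (Real.log (1 / P a)))
        ≤ ∑ a ∈ s, Real.log n / (n:ℝ) := by
          apply Finset.sum_le_sum
          intro a ha
          exact lemB (hpos a ha) (hle1 a ha) hn
      _ = s.card * Real.log n / n := by rw [Finset.sum_const, nsmul_eq_mul]; ring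
end

section
/- For all x ∈ (0,1) and all integers n ≥ 3, we have 0 ≤ (1−x)ⁿ · x · log(1/x) ≤ log(n)/n. -/
/-- For all `x ∈ (0,1)` and integers `n ≥ 3`,
`0 ≤ (1−x)ⁿ x log(1/x) ≤ log(n)/n`. -/
theorem missing_mass_log_ineq :
    ∀ x ∈ Set.Ioo (0 : ℝ) 1, ∀ n : ℕ, 3 ≤ n →
      0 ≤ (1 - x) ^ n * x * Real.log (1 / x) ∧
      (1 - x) ^ n * x * Real.log (1 / x) ≤ Real.log n / n := by
  rintro x ⟨hx0, hx1⟩ n hn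
  set c : ℝ := (n : ℝ) with hc
  have hc3 : (3 : ℝ) ≤ c := by rw [hc]; exact_mod_cast hn
  have hc0 : (0 : ℝ) < c := by linarith
  have hlogx : 0 ≤ Real.log (1 / x) := by
    apply Real.log_nonneg
    rw [le_div_iff₀ hx0]; linarith
  have hpow0 : 0 ≤ (1 - x) ^ n := pow_nonneg (by linarith) n
  have hpow1 : (1 - x) ^ n ≤ 1 := by
    apply pow_le_one₀ (by linarith) (by linarith)
  have hlogc : 1 ≤ Real.log c := by
    have h3 : Real.exp 1 < 3 := by
      have := Real.exp_one_lt_d9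
      linarith
    calc (1:ℝ) = Real.log (Real.exp 1) := (Real.log_exp 1).symm
      _ ≤ Real.log c := Real.log_le_log (Real.exp_pos 1) (by linarith)
  constructor
  · exact mul_nonneg (mul_nonneg hpow0 hx0.le) hlogx
  rcases le_total (c * x) 1 with hcx | hcx
  · -- small x case: (1-x)^n ≤ 1 and c x log(1/x) ≤ log c
    have hkey : c * (x * Real.log (1 / x)) ≤ Real.log c := by
      have hsplit : Real.log (1 / x) = Real.log (1 / (c * x)) + Real.log c := by
        rw [← Real.log_mul (by positivity) (ne_of_gt hc0)]
        congr 1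
        field_simp
      have hle : Real.log (1 / (c * x)) ≤ 1 / (c * x) - 1 :=
        Real.log_le_sub_one_of_pos (by positivity)
      have hcx0 : 0 < c * x := by positivity
      have h1 : c * x * Real.log (1 / (c * x)) ≤ 1 - c * x := by
        have := mul_le_mul_of_nonneg_left hle (le_of_lt hcx0)
        calc c * x * Real.log (1 / (c * x)) ≤ c * x * (1 / (c * x) - 1) := this
          _ = 1 - c * x := by field_simp
      have h2 : c * x * Real.log c ≤ Real.log c := by
        nlinarith
      calc c * (x * Real.log (1 / x))
          = c * x * Real.log (1 / (c * x)) + c * x * Real.log c := by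
            rw [hsplit]; ring
        _ ≤ 1 - c * x + c * x * Real.log c := by linarith
        _ ≤ Real.log c := by nlinarith
    have hmul : (1 - x) ^ n * x * Real.log (1 / x) ≤ x * Real.log (1 / x) := by
      have hnn : 0 ≤ x * Real.log (1 / x) := mul_nonneg hx0.le hlogx
      nlinarith
    rw [le_div_iff₀ hc0]
    nlinarith
  · -- large x case: (1-x)^n x ≤ 1/c and log(1/x) ≤ log c
    have hlog : Real.log (1 / x) ≤ Real.log c := by
      apply Real.log_le_log (by positivity)
      rw [div_le_iff₀ hx0]; linarith [hcx]
    have hexp : (1 - x) ≤ Real.exp (-x) := by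
      have := Real.add_one_le_exp (-x)
      linarith
    have hpowe : (1 - x) ^ n ≤ Real.exp (-(c * x)) := by
      calc (1 - x) ^ n ≤ (Real.exp (-x)) ^ n :=
            pow_le_pow_left₀ (by linarith) hexp n
        _ = Real.exp (-(c * x)) := by
            rw [← Real.exp_nat_mul]; ring_nf; simp only [hc, mul_comm]
    have hexp2 : Real.exp (-(c * x)) ≤ 1 / (c * x) := by
      rw [Real.exp_neg, one_div]
      apply inv_anti₀ (by positivity)
      have := Real.add_one_le_exp (c * x)
      linarith
    have h1 : (1 - x) ^ n * x ≤ 1 / c := by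
      have : (1 - x) ^ n * x ≤ (1 / (c * x)) * x := by
        have h := le_trans hpowe hexp2
        nlinarith
      calc (1 - x) ^ n * x ≤ (1 / (c * x)) * x := this
        _ = 1 / c := by field_simp
    calc (1 - x) ^ n * x * Real.log (1 / x)
        ≤ (1 / c) * Real.log c := by
          apply mul_le_mul h1 hlog hlogx (by positivity)
      _ = Real.log c / c := by ring
end

section
/- Suppose f:(0,∞)→[0,∞) is convex with f(1)=0, f(0) < ∞, f*(0) < ∞, and |f'(t)| ≤ C₁ max{1, log(1/t)} for t ∈ (0,1). Then lim_{t→∞} f'(t) = f*(0) and lim_{t→∞} (f*)'(t) = f(0), where f*(t) = t f(1/t). -/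
/-- If `f` is convex with `f(1)=0`, `f(0) < ∞`, `f*(0) < ∞`, and the derivative
bound `|f'(t)| ≤ C₁ max{1, log(1/t)}` holds on `(0,1)`, then
`f'(t) → f*(0)` and `(f*)'(t) → f(0)` as `t → ∞`, where `f*(t) = t f(1/t)`. -/
theorem deriv_limits_at_top (f : ℝ → ℝ) (C1 f0 fstar0 : ℝ)
    (hconv : ConvexOn ℝ (Set.Ioi 0) f)
    (hnonneg : ∀ t ∈ Set.Ioi (0 : ℝ), 0 ≤ f t) (hf1 : f 1 = 0)
    (hdiff : ∀ t ∈ Set.Ioi (0 : ℝ), DifferentiableAt ℝ f t)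
    (hcont : ContinuousOn (deriv f) (Set.Ioi 0))
    (hf0 : Filter.Tendsto f (nhdsWithin 0 (Set.Ioi 0)) (nhds f0))
    (hfstar0 : Filter.Tendsto (fun t => t * f (1 / t))
        (nhdsWithin 0 (Set.Ioi 0)) (nhds fstar0))
    (hC1 : ∀ t ∈ Set.Ioo (0 : ℝ) 1, |deriv f t| ≤ C1 * max 1 (Real.log (1 / t))) :
    Filter.Tendsto (deriv f) Filter.atTop (nhds fstar0) ∧
    Filter.Tendsto (deriv fun t => t * f (1 / t)) Filter.atTop (nhds f0) := by
  -- `1/t → 0` within `Ioi 0` as `t → ∞`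
  have h_inv : Filter.Tendsto (fun t : ℝ => 1 / t) Filter.atTop
      (nhdsWithin 0 (Set.Ioi 0)) := by
    simpa [one_div] using (tendsto_inv_atTop_nhdsGT_zero : Filter.Tendsto (fun r : ℝ => r⁻¹)
      Filter.atTop (nhdsWithin 0 (Set.Ioi 0)))
  -- `f t / t → fstar0` as `t → ∞`
  have hS : Filter.Tendsto (fun t : ℝ => f t / t) Filter.atTop (nhds fstar0) := by
    refine (hfstar0.comp h_inv).congr' ?_
    filter_upwards [Filter.eventually_gt_atTop (0 : ℝ)] with t ht
    have : (1 : ℝ) / (1 / t) = t := one_div_one_div t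
    simp only [Function.comp]
    rw [this]; ring
  -- `f (1/t) → f0` as `t → ∞`
  have hA : Filter.Tendsto (fun t : ℝ => f (1 / t)) Filter.atTop (nhds f0) :=
    hf0.comp h_inv
  -- `log t / t → 0`
  have hlog : Filter.Tendsto (fun t : ℝ => Real.log t / t) Filter.atTop (nhds 0) := by
    have := Real.tendsto_pow_log_div_mul_add_atTop 1 0 1 one_ne_zero
    simpa using this
  -- `deriv f (1/t) / t → 0`
  have hB : Filter.Tendsto (fun t : ℝ => deriv f (1 / t) / t) Filter.atTop (nhds 0) := by
    have hCl : Filter.Tendsto (fun t : ℝ => C1 * (Real.log t / t)) Filter.atTop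
        (nhds (C1 * 0)) := hlog.const_mul C1
    rw [mul_zero] at hCl
    refine squeeze_zero_norm' ?_ hCl
    filter_upwards [Filter.eventually_ge_atTop (Real.exp 1)] with t ht
    have ht0 : (0 : ℝ) < t := lt_of_lt_of_le (Real.exp_pos 1) ht
    have ht1 : (1 : ℝ) < t := lt_of_lt_of_le (by
      have := Real.add_one_le_exp (1 : ℝ); linarith) ht
    have hmem : 1 / t ∈ Set.Ioo (0 : ℝ) 1 := by
      constructor
      · positivity
      · rw [div_lt_one ht0]; exact ht1
    have hlt : (1 : ℝ) ≤ Real.log t := (Real.le_log_iff_exp_le ht0).mpr ht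
    have hb := hC1 _ hmem
    rw [one_div_one_div] at hb
    rw [max_eq_right hlt] at hb
    have : ‖deriv f (1 / t) / t‖ = |deriv f (1 / t)| / t := by
      rw [Real.norm_eq_abs, abs_div, abs_of_pos ht0]
    rw [this]
    calc |deriv f (1 / t)| / t ≤ C1 * Real.log t / t := by
          apply div_le_div_of_nonneg_right hb ht0.le |>.trans_eq rfl
      _ = C1 * (Real.log t / t) := by ring
  constructor
  · -- squeeze: slope (t/2) t ≤ deriv f t ≤ slope t (2t)
    have hL : Filter.Tendsto (fun t : ℝ => 2 * (f t / t) - f (t / 2) / (t / 2))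
        Filter.atTop (nhds fstar0) := by
      have h2 : Filter.Tendsto (fun t : ℝ => f (t / 2) / (t / 2)) Filter.atTop
          (nhds fstar0) := hS.comp (Filter.tendsto_id.atTop_div_const two_pos)
      have := ((hS.const_mul 2).sub h2)
      simpa [two_mul] using this
    have hU : Filter.Tendsto (fun t : ℝ => 2 * (f (2 * t) / (2 * t)) - f t / t)
        Filter.atTop (nhds fstar0) := by
      have h2 : Filter.Tendsto (fun t : ℝ => f (2 * t) / (2 * t)) Filter.atTop
          (nhds fstar0) := hS.comp (Filter.tendsto_id.const_mul_atTop two_pos)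
      have := ((h2.const_mul 2).sub hS)
      simpa [two_mul] using this
    refine tendsto_of_tendsto_of_tendsto_of_le_of_le' hL hU ?_ ?_
    · filter_upwards [Filter.eventually_gt_atTop (0 : ℝ)] with t ht
      have h1 : t / 2 ∈ Set.Ioi (0 : ℝ) := by simpa using by positivity
      have h2 : t ∈ Set.Ioi (0 : ℝ) := ht
      have hlt : t / 2 < t := by linarith
      have := hconv.slope_le_deriv h1 h2 hlt (hdiff t h2)
      rw [slope_def_field] at this
      have heq : (f t - f (t / 2)) / (t - t / 2)
          = 2 * (f t / t) - f (t / 2) / (t / 2) := by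
        set a := f t
        set b := f (t / 2)
        rw [show t - t / 2 = t / 2 by ring, sub_div, div_div_eq_mul_div,
          mul_comm a 2, mul_div_assoc]
      linarith [heq ▸ this]
    · filter_upwards [Filter.eventually_gt_atTop (0 : ℝ)] with t ht
      have h2 : (2 * t) ∈ Set.Ioi (0 : ℝ) := by simpa using by positivity
      have h1 : t ∈ Set.Ioi (0 : ℝ) := ht
      have hlt : t < 2 * t := by linarith
      have := hconv.deriv_le_slope h1 h2 hlt (hdiff t h1)
      rw [slope_def_field] at this
      have heq : (f (2 * t) - f t) / (2 * t - t)
          = 2 * (f (2 * t) / (2 * t)) - f t / t := by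
        set a := f (2 * t)
        set b := f t
        rw [show 2 * t - t = t by ring, sub_div, ← mul_div_assoc,
          mul_div_mul_left a t (two_ne_zero)]
      linarith [heq ▸ this]
  · -- deriv of t ↦ t * f (1/t)
    have hderiv : ∀ t : ℝ, 0 < t →
        deriv (fun t => t * f (1 / t)) t = f (1 / t) - deriv f (1 / t) / t := by
      intro t ht
      have hinner : HasDerivAt (fun x : ℝ => 1 / x) (-(1 / t ^ 2)) t := by
        simpa [one_div] using hasDerivAt_inv ht.ne'
      have hmem : 1 / t ∈ Set.Ioi (0 : ℝ) := by simpa using by positivity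
      have hcomp : HasDerivAt (fun x : ℝ => f (1 / x))
          (deriv f (1 / t) * (-(1 / t ^ 2))) t :=
        (hdiff _ hmem).hasDerivAt.comp t hinner
      have hmul : HasDerivAt (fun x : ℝ => x * f (1 / x))
          (1 * f (1 / t) + t * (deriv f (1 / t) * (-(1 / t ^ 2)))) t :=
        (hasDerivAt_id t).mul hcomp
      rw [hmul.deriv]
      field_simp
      ring
    have : Filter.Tendsto (fun t : ℝ => f (1 / t) - deriv f (1 / t) / t)
        Filter.atTop (nhds (f0 - 0)) := hA.sub hB
    rw [sub_zero] at this
    refine this.congr' ?_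
    filter_upwards [Filter.eventually_gt_atTop (0 : ℝ)] with t ht
    exact (hderiv t ht).symm
end
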